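/- Let γ > 0 and suppose n_x ≥ 1 and K_γ is nonempty. Then K_γ is unbounded: for every r > 0 there exists K ∈ K_γ with ‖K‖ > r (Frobenius norm). -/

import Mathlib

open Matrix

noncomputable section

/-- Operator norm (largest singular value) of a complex matrix. -/
def matOpNorm {m n : ℕ} (M : Matrix (Fin m) (Fin n) ℂ) : ℝ :=
  ‖(Matrix.toEuclideanLin M).toContinuousLinearMap‖

/-- A real square matrix is Hurwitz if all its eigenvalues (over ℂ) have negative real part. -/
def IsHurwitz {n : Type*} [Fintype n] [DecidableEq n] (M : Matrix n n ℝ) : Prop :=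
  ∀ μ ∈ spectrum ℂ (M.map (Complex.ofReal ·)), μ.re < 0

/-- The plant data. -/
structure Plant (nx nu ny nw nz : ℕ) where
  A : Matrix (Fin nx) (Fin nx) ℝ
  B1 : Matrix (Fin nx) (Fin nw) ℝ
  B2 : Matrix (Fin nx) (Fin nu) ℝ
  C1 : Matrix (Fin nz) (Fin nx) ℝ
  C2 : Matrix (Fin ny) (Fin nx) ℝ
  D11 : Matrix (Fin nz) (Fin nw) ℝ
  D12 : Matrix (Fin nz) (Fin nu) ℝ
  D21 : Matrix (Fin ny) (Fin nw) ℝ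

namespace Plant

variable {nx nu ny nw nz : ℕ} (P : Plant nx nu ny nw nz)

/-- Closed-loop `A` matrix. -/
def Acl (K : Matrix (Fin nu ⊕ Fin nx) (Fin ny ⊕ Fin nx) ℝ) :
    Matrix (Fin nx ⊕ Fin nx) (Fin nx ⊕ Fin nx) ℝ :=
  fromBlocks (P.A + P.B2 * K.toBlocks₁₁ * P.C2) (P.B2 * K.toBlocks₁₂)
    (K.toBlocks₂₁ * P.C2) K.toBlocks₂₂

/-- Closed-loop `B` matrix. -/
def Bcl (K : Matrix (Fin nu ⊕ Fin nx) (Fin ny ⊕ Fin nx) ℝ) :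
    Matrix (Fin nx ⊕ Fin nx) (Fin nw) ℝ :=
  fromRows (P.B1 + P.B2 * K.toBlocks₁₁ * P.D21) (K.toBlocks₂₁ * P.D21)

/-- Closed-loop `C` matrix. -/
def Ccl (K : Matrix (Fin nu ⊕ Fin nx) (Fin ny ⊕ Fin nx) ℝ) :
    Matrix (Fin nz) (Fin nx ⊕ Fin nx) ℝ :=
  fromCols (P.C1 + P.D12 * K.toBlocks₁₁ * P.C2) (P.D12 * K.toBlocks₁₂)

/-- Closed-loop `D` matrix. -/
def Dcl (K : Matrix (Fin nu ⊕ Fin nx) (Fin ny ⊕ Fin nx) ℝ) :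
    Matrix (Fin nz) (Fin nw) ℝ :=
  P.D11 + P.D12 * K.toBlocks₁₁ * P.D21

/-- The set of stabilizing full-order dynamic output feedback controllers. -/
def Cstab : Set (Matrix (Fin nu ⊕ Fin nx) (Fin ny ⊕ Fin nx) ℝ) :=
  {K | IsHurwitz (P.Acl K)}

/-- Closed-loop transfer matrix at frequency `s = iω`. -/
def transferAt (K : Matrix (Fin nu ⊕ Fin nx) (Fin ny ⊕ Fin nx) ℝ) (ω : ℝ) :
    Matrix (Fin nz) (Fin nw) ℂ :=
  (P.Ccl K).map (Complex.ofReal ·) *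
    (((Complex.I * (ω : ℂ)) • (1 : Matrix (Fin nx ⊕ Fin nx) (Fin nx ⊕ Fin nx) ℂ)
        - (P.Acl K).map (Complex.ofReal ·))⁻¹) *
    (P.Bcl K).map (Complex.ofReal ·) + (P.Dcl K).map (Complex.ofReal ·)

/-- Closed-loop H∞ norm. -/
def hinfNorm (K : Matrix (Fin nu ⊕ Fin nx) (Fin ny ⊕ Fin nx) ℝ) : ℝ :=
  ⨆ ω : ℝ, matOpNorm (P.transferAt K ω)

/-- The feasible set `K_γ`. -/
def Kset (γ : ℝ) : Set (Matrix (Fin nu ⊕ Fin nx) (Fin ny ⊕ Fin nx) ℝ) :=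
  {K | K ∈ P.Cstab ∧ P.hinfNorm K < γ}

end Plant

/-- The similarity transformation `𝒯_T` on full-order controllers. -/
def simT {nx nu ny : ℕ} (T : Matrix (Fin nx) (Fin nx) ℝ)
    (K : Matrix (Fin nu ⊕ Fin nx) (Fin ny ⊕ Fin nx) ℝ) :
    Matrix (Fin nu ⊕ Fin nx) (Fin ny ⊕ Fin nx) ℝ :=
  fromBlocks K.toBlocks₁₁ (K.toBlocks₁₂ * T⁻¹) (T * K.toBlocks₂₁) (T * K.toBlocks₂₂ * T⁻¹)

/-- Frobenius norm of a real matrix. -/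
def frobNorm {m n : Type*} [Fintype m] [Fintype n] (M : Matrix m n ℝ) : ℝ :=
  Real.sqrt (∑ i, ∑ j, (M i j) ^ 2)

section Aux

variable {nx nu ny nw nz : ℕ}

/-- Complexification of a real matrix. -/
private def cm {m n : Type*} (M : Matrix m n ℝ) : Matrix m n ℂ :=
  M.map (Complex.ofReal ·)

private lemma cm_def {m n : Type*} (M : Matrix m n ℝ) :
    M.map (Complex.ofReal ·) = cm M := rfl

private lemma cm_mul {m n p : Type*} [Fintype n] (M : Matrix m n ℝ) (N : Matrix n p ℝ) :
    cm (M * N) = cm M * cm N := by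
  ext i j
  simp [cm, Matrix.mul_apply]

private lemma cm_add {m n : Type*} (M N : Matrix m n ℝ) : cm (M + N) = cm M + cm N := by
  ext i j; simp [cm]

private lemma cm_smul {m n : Type*} (c : ℝ) (M : Matrix m n ℝ) :
    cm (c • M) = c • cm M := by
  ext i j; simp [cm, Complex.real_smul]

private lemma cm_zero {m n : Type*} : cm (0 : Matrix m n ℝ) = 0 := by
  ext i j; simp [cm]

private lemma cm_one {n : Type*} [Fintype n] [DecidableEq n] :
    cm (1 : Matrix n n ℝ) = 1 := by
  ext i j; by_cases h : i = j <;> simp [cm, Matrix.one_apply, h]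

private lemma cm_fromBlocks {l m n o : Type*} (A : Matrix n l ℝ) (B : Matrix n m ℝ)
    (C : Matrix o l ℝ) (D : Matrix o m ℝ) :
    cm (fromBlocks A B C D) = fromBlocks (cm A) (cm B) (cm C) (cm D) :=
  Matrix.fromBlocks_map A B C D _

private lemma cm_fromRows {m₁ m₂ n : Type*} (A : Matrix m₁ n ℝ) (B : Matrix m₂ n ℝ) :
    cm (fromRows A B) = fromRows (cm A) (cm B) := by
  ext (i | i) j <;> rfl

private lemma cm_fromColumns {m n₁ n₂ : Type*} (A : Matrix m n₁ ℝ) (B : Matrix m n₂ ℝ) :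
    cm (fromCols A B) = fromCols (cm A) (cm B) := by
  ext i (j | j) <;> rfl

private lemma abs_entry_le_frobNorm {m n : Type*} [Fintype m] [Fintype n]
    (M : Matrix m n ℝ) (i : m) (j : n) : |M i j| ≤ frobNorm M := by
  rw [frobNorm, ← Real.sqrt_sq_eq_abs]
  apply Real.sqrt_le_sqrt
  calc M i j ^ 2 ≤ ∑ j', M i j' ^ 2 :=
        Finset.single_le_sum (f := fun j' => M i j' ^ 2)
          (fun _ _ => sq_nonneg _) (Finset.mem_univ j)
    _ ≤ ∑ i', ∑ j', M i' j' ^ 2 :=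
        Finset.single_le_sum (f := fun i' => ∑ j', M i' j' ^ 2)
          (fun _ _ => Finset.sum_nonneg fun _ _ => sq_nonneg _) (Finset.mem_univ i)

set_option maxHeartbeats 1000000 in
/-- Scaling `simT (c • 1)` preserves membership in `Kset`. -/
private lemma scale_mem (P : Plant nx nu ny nw nz) {γ : ℝ}
    {K : Matrix (Fin nu ⊕ Fin nx) (Fin ny ⊕ Fin nx) ℝ} (hK : K ∈ P.Kset γ)
    {c : ℝ} (hc : 0 < c) :
    fromBlocks K.toBlocks₁₁ (c⁻¹ • K.toBlocks₁₂) (c • K.toBlocks₂₁) K.toBlocks₂₂ ∈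
      P.Kset γ := by
  set K' : Matrix (Fin nu ⊕ Fin nx) (Fin ny ⊕ Fin nx) ℝ :=
    fromBlocks K.toBlocks₁₁ (c⁻¹ • K.toBlocks₁₂) (c • K.toBlocks₂₁) K.toBlocks₂₂ with hK'def
  have hb11 : K'.toBlocks₁₁ = K.toBlocks₁₁ := Matrix.toBlocks_fromBlocks₁₁ _ _ _ _
  have hb12 : K'.toBlocks₁₂ = c⁻¹ • K.toBlocks₁₂ := Matrix.toBlocks_fromBlocks₁₂ _ _ _ _
  have hb21 : K'.toBlocks₂₁ = c • K.toBlocks₂₁ := Matrix.toBlocks_fromBlocks₂₁ _ _ _ _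
  have hb22 : K'.toBlocks₂₂ = K.toBlocks₂₂ := Matrix.toBlocks_fromBlocks₂₂ _ _ _ _
  have hc0 : c ≠ 0 := hc.ne'
  set S : Matrix (Fin nx ⊕ Fin nx) (Fin nx ⊕ Fin nx) ℂ :=
    fromBlocks 1 0 0 (c • 1) with hSdef
  set T : Matrix (Fin nx ⊕ Fin nx) (Fin nx ⊕ Fin nx) ℂ :=
    fromBlocks 1 0 0 (c⁻¹ • 1) with hTdef
  have hST : S * T = 1 := by
    rw [hSdef, hTdef, fromBlocks_multiply]
    simp [smul_mul_assoc, mul_smul_comm, smul_smul, mul_inv_cancel₀ hc0,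
      inv_mul_cancel₀ hc0, fromBlocks_one]
  have hTS : T * S = 1 := by
    rw [hSdef, hTdef, fromBlocks_multiply]
    simp [smul_mul_assoc, mul_smul_comm, smul_smul, mul_inv_cancel₀ hc0,
      inv_mul_cancel₀ hc0, fromBlocks_one]
  have hA : cm (P.Acl K') = S * cm (P.Acl K) * T := by
    rw [Plant.Acl, Plant.Acl, hb11, hb12, hb21, hb22, cm_fromBlocks, cm_fromBlocks,
      hSdef, hTdef, fromBlocks_multiply, fromBlocks_multiply]
    congr 1 <;>
      simp [cm_mul, cm_smul, cm_add, smul_mul_assoc, mul_smul_comm, smul_smul,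
        inv_mul_cancel₀ hc0, mul_inv_cancel₀ hc0]
  have hspec : spectrum ℂ (cm (P.Acl K')) = spectrum ℂ (cm (P.Acl K)) := by
    rw [hA]
    exact spectrum.units_conjugate (u := ⟨S, T, hST, hTS⟩)
  have hstab : K' ∈ P.Cstab := by
    intro μ hμ
    exact hK.1 μ (by rwa [cm_def, hspec] at hμ)
  have hSinv : S⁻¹ = T := Matrix.inv_eq_right_inv hST
  have hTinv : T⁻¹ = S := Matrix.inv_eq_right_inv hTS
  have hC : cm (P.Ccl K') = cm (P.Ccl K) * T := by
    rw [Plant.Ccl, Plant.Ccl, hb11, hb12, cm_fromColumns, cm_fromColumns, hTdef,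
      fromCols_mul_fromBlocks]
    congr 1 <;>
      simp [cm_mul, cm_smul, cm_add, smul_mul_assoc, mul_smul_comm]
  have hBc : cm (P.Bcl K') = S * cm (P.Bcl K) := by
    rw [Plant.Bcl, Plant.Bcl, hb11, hb21, cm_fromRows, cm_fromRows, hSdef,
      fromBlocks_mul_fromRows]
    congr 1 <;>
      simp [cm_mul, cm_smul, cm_add, smul_mul_assoc, mul_smul_comm]
  have hD : P.Dcl K' = P.Dcl K := by rw [Plant.Dcl, Plant.Dcl, hb11]
  have htr : ∀ ω : ℝ, P.transferAt K' ω = P.transferAt K ω := by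
    intro ω
    rw [Plant.transferAt, Plant.transferAt]
    simp only [cm_def]
    rw [hA, hC, hBc, hD]
    have h1 : (Complex.I * (ω : ℂ)) • (1 : Matrix (Fin nx ⊕ Fin nx) (Fin nx ⊕ Fin nx) ℂ)
        - S * cm (P.Acl K) * T
        = S * ((Complex.I * (ω : ℂ)) • 1 - cm (P.Acl K)) * T := by
      rw [Matrix.mul_sub, Matrix.sub_mul]
      congr 1
      rw [Matrix.mul_smul, Matrix.mul_one, Matrix.smul_mul, hST]
    rw [h1, Matrix.mul_inv_rev, Matrix.mul_inv_rev, hSinv, hTinv]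
    have cancel : ∀ X : Matrix (Fin nx ⊕ Fin nx) (Fin nx ⊕ Fin nx) ℂ,
        ∀ Y : Matrix (Fin nx ⊕ Fin nx) (Fin nw) ℂ, T * (S * (X * Y)) = X * Y := by
      intro X Y
      rw [← Matrix.mul_assoc T S, hTS, Matrix.one_mul]
    simp only [Matrix.mul_assoc]
    rw [cancel, ← Matrix.mul_assoc T S, hTS, Matrix.one_mul]
  have hnorm : P.hinfNorm K' = P.hinfNorm K := by
    rw [Plant.hinfNorm, Plant.hinfNorm]
    exact iSup_congr fun ω => by rw [htr ω]
  refine ⟨hstab, ?_⟩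
  rw [hnorm]
  exact hK.2

/-- For a controller with `B_K = 0`, the transfer function depends only on `D_K`. -/
private lemma reduce_transfer (P : Plant nx nu ny nw nz)
    {M : Matrix (Fin nu ⊕ Fin nx) (Fin ny ⊕ Fin nx) ℝ} (hM : M ∈ P.Cstab)
    (h0 : M.toBlocks₂₁ = 0) (ω : ℝ) :
    P.transferAt M ω =
      cm (P.C1 + P.D12 * M.toBlocks₁₁ * P.C2) *
        (((Complex.I * (ω : ℂ)) • (1 : Matrix (Fin nx) (Fin nx) ℂ)
            - cm (P.A + P.B2 * M.toBlocks₁₁ * P.C2))⁻¹) *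
        cm (P.B1 + P.B2 * M.toBlocks₁₁ * P.D21) +
      cm (P.D11 + P.D12 * M.toBlocks₁₁ * P.D21) := by
  set s : ℂ := Complex.I * (ω : ℂ) with hs
  set Ah := P.A + P.B2 * M.toBlocks₁₁ * P.C2 with hAh
  set E : Matrix (Fin nx) (Fin nx) ℂ := s • 1 - cm Ah with hE
  set G : Matrix (Fin nx) (Fin nx) ℂ := s • 1 - cm M.toBlocks₂₂ with hG
  set N : Matrix (Fin nx ⊕ Fin nx) (Fin nx ⊕ Fin nx) ℂ := s • 1 - cm (P.Acl M) with hN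
  have hNb : N = fromBlocks E (-(cm (P.B2 * M.toBlocks₁₂))) 0 G := by
    rw [hN, Plant.Acl, h0, Matrix.zero_mul, cm_fromBlocks, ← fromBlocks_one,
      fromBlocks_smul, sub_eq_add_neg, fromBlocks_neg, fromBlocks_add]
    simp [hE, hG, hAh, sub_eq_add_neg, cm_zero]
  have hre : s.re = 0 := by simp [hs]
  have hNunit : IsUnit N.det := by
    rw [← Matrix.isUnit_iff_isUnit_det]
    have hns : s ∉ spectrum ℂ (cm (P.Acl M)) := by
      intro hmem
      have := hM s (by rwa [cm_def])
      rw [hre] at this; exact lt_irrefl 0 this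
    rw [spectrum.notMem_iff] at hns
    rwa [hN, ← Algebra.algebraMap_eq_smul_one]
  have hdet : N.det = E.det * G.det := by
    rw [hNb, Matrix.det_fromBlocks_zero₂₁]
  have hEunit : IsUnit E.det := by
    rw [hdet] at hNunit
    exact isUnit_of_mul_isUnit_left hNunit
  set Bh := P.B1 + P.B2 * M.toBlocks₁₁ * P.D21 with hBh
  have hBcl : cm (P.Bcl M) = fromRows (cm Bh) 0 := by
    rw [Plant.Bcl, h0, Matrix.zero_mul, cm_fromRows, cm_zero]
  have key : N⁻¹ * fromRows (cm Bh) (0 : Matrix (Fin nx) (Fin nw) ℂ) = fromRows (E⁻¹ * cm Bh) (0 : Matrix (Fin nx) (Fin nw) ℂ) := by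
    have h2 : N * fromRows (E⁻¹ * cm Bh) (0 : Matrix (Fin nx) (Fin nw) ℂ) = fromRows (cm Bh) (0 : Matrix (Fin nx) (Fin nw) ℂ) := by
      rw [hNb, fromBlocks_mul_fromRows, Matrix.mul_nonsing_inv_cancel_left E (cm Bh) hEunit]
      simp
    conv_lhs => rw [← h2]
    rw [Matrix.nonsing_inv_mul_cancel_left _ _ hNunit]
  have hCcl : cm (P.Ccl M) = fromCols (cm (P.C1 + P.D12 * M.toBlocks₁₁ * P.C2))
      (cm (P.D12 * M.toBlocks₁₂)) := by
    rw [Plant.Ccl, cm_fromColumns]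
  rw [Plant.transferAt]
  simp only [cm_def]
  rw [← hs, ← hN, hBcl, hCcl, Matrix.mul_assoc, key, fromCols_mul_fromRows,
    Matrix.mul_zero, add_zero, Plant.Dcl, ← Matrix.mul_assoc]

/-- Spectrum splitting for block-triangular closed loop. -/
private lemma spec_split (P : Plant nx nu ny nw nz)
    {M : Matrix (Fin nu ⊕ Fin nx) (Fin ny ⊕ Fin nx) ℝ} (h0 : M.toBlocks₂₁ = 0) :
    spectrum ℂ (cm (P.Acl M)) =
      spectrum ℂ (cm (P.A + P.B2 * M.toBlocks₁₁ * P.C2)) ∪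
        spectrum ℂ (cm M.toBlocks₂₂) := by
  ext μ
  simp only [Set.mem_union, spectrum.mem_iff, Algebra.algebraMap_eq_smul_one]
  rw [← not_and_or, not_iff_not]
  have hb : μ • (1 : Matrix (Fin nx ⊕ Fin nx) (Fin nx ⊕ Fin nx) ℂ) - cm (P.Acl M)
      = fromBlocks (μ • 1 - cm (P.A + P.B2 * M.toBlocks₁₁ * P.C2))
          (-(cm (P.B2 * M.toBlocks₁₂))) 0 (μ • 1 - cm M.toBlocks₂₂) := by
    rw [Plant.Acl, h0, Matrix.zero_mul, cm_fromBlocks, ← fromBlocks_one,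
      fromBlocks_smul, sub_eq_add_neg, fromBlocks_neg, fromBlocks_add]
    simp [sub_eq_add_neg, cm_zero]
  rw [hb, Matrix.isUnit_iff_isUnit_det, Matrix.det_fromBlocks_zero₂₁,
    Matrix.isUnit_iff_isUnit_det, Matrix.isUnit_iff_isUnit_det,
    isUnit_iff_ne_zero, isUnit_iff_ne_zero, isUnit_iff_ne_zero, mul_ne_zero_iff]

set_option maxHeartbeats 1000000 in
/-- The `B_K = 0` replacement controller stays in `Kset`. -/
private lemma zero21_mem (hnx : 1 ≤ nx) (P : Plant nx nu ny nw nz) {γ : ℝ}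
    {K : Matrix (Fin nu ⊕ Fin nx) (Fin ny ⊕ Fin nx) ℝ} (hK : K ∈ P.Kset γ)
    (hB : K.toBlocks₂₁ = 0) {c : ℝ} (hc : 0 < c) :
    fromBlocks K.toBlocks₁₁ K.toBlocks₁₂ 0 ((-c) • 1) ∈ P.Kset γ := by
  set K' : Matrix (Fin nu ⊕ Fin nx) (Fin ny ⊕ Fin nx) ℝ :=
    fromBlocks K.toBlocks₁₁ K.toBlocks₁₂ 0 ((-c) • 1) with hK'def
  have hb11 : K'.toBlocks₁₁ = K.toBlocks₁₁ := Matrix.toBlocks_fromBlocks₁₁ _ _ _ _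
  have hb21 : K'.toBlocks₂₁ = 0 := Matrix.toBlocks_fromBlocks₂₁ _ _ _ _
  have hb22 : K'.toBlocks₂₂ = (-c) • 1 := Matrix.toBlocks_fromBlocks₂₂ _ _ _ _
  haveI : Nonempty (Fin nx) := ⟨⟨0, hnx⟩⟩
  haveI : Nontrivial (Matrix (Fin nx) (Fin nx) ℂ) := by
    refine ⟨0, 1, fun h => ?_⟩
    have := congrFun (congrFun h ⟨0, hnx⟩) ⟨0, hnx⟩
    simp [Matrix.one_apply] at this
  have hspecK := spec_split P hB
  have hAhH : ∀ μ ∈ spectrum ℂ (cm (P.A + P.B2 * K.toBlocks₁₁ * P.C2)), μ.re < 0 := by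
    intro μ hμ
    exact hK.1 μ (by rw [cm_def, hspecK]; exact Set.mem_union_left _ hμ)
  have hscalar : cm ((-c) • (1 : Matrix (Fin nx) (Fin nx) ℝ)) =
      algebraMap ℂ (Matrix (Fin nx) (Fin nx) ℂ) (-c : ℂ) := by
    ext i j
    by_cases h : i = j <;>
      simp [cm, Matrix.one_apply, Matrix.algebraMap_matrix_apply, h]
  have hstab : K' ∈ P.Cstab := by
    intro μ hμ
    rw [cm_def, spec_split P hb21, hb11, hb22, hscalar, spectrum.scalar_eq] at hμ
    rcases hμ with hμ | hμ
    · exact hAhH μ hμ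
    · rw [Set.mem_singleton_iff] at hμ
      rw [hμ]
      simpa using hc
  have htr : ∀ ω : ℝ, P.transferAt K' ω = P.transferAt K ω := by
    intro ω
    rw [reduce_transfer P hstab hb21 ω, reduce_transfer P hK.1 hB ω, hb11]
  have hnorm : P.hinfNorm K' = P.hinfNorm K := by
    rw [Plant.hinfNorm, Plant.hinfNorm]
    exact iSup_congr fun ω => by rw [htr ω]
  refine ⟨hstab, ?_⟩
  rw [hnorm]
  exact hK.2

end Aux

/-- If `n_x ≥ 1` and `K_γ` is nonempty (`γ > 0`), then `K_γ` is unbounded: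
for every `r > 0` there is `K ∈ K_γ` with Frobenius norm `‖K‖ > r`. -/
theorem Kset_unbounded {nx nu ny nw nz : ℕ} (hnx : 1 ≤ nx) (hnu : 0 < nu) (hny : 0 < ny)
    (hnw : 0 < nw) (hnz : 0 < nz) (P : Plant nx nu ny nw nz) (γ : ℝ) (hγ : 0 < γ)
    (hne : (P.Kset γ).Nonempty) :
    ∀ r : ℝ, 0 < r → ∃ K ∈ P.Kset γ, frobNorm K > r := by
  intro r hr
  obtain ⟨K, hK⟩ := hne
  by_cases hB : K.toBlocks₂₁ = 0
  · refine ⟨fromBlocks K.toBlocks₁₁ K.toBlocks₁₂ 0 ((-(r + 1)) • 1),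
      zero21_mem hnx P hK hB (by linarith), ?_⟩
    have hle := abs_entry_le_frobNorm
      (fromBlocks K.toBlocks₁₁ K.toBlocks₁₂ 0 ((-(r + 1)) • (1 : Matrix (Fin nx) (Fin nx) ℝ)))
      (Sum.inr ⟨0, hnx⟩) (Sum.inr ⟨0, hnx⟩)
    have hent : |fromBlocks K.toBlocks₁₁ K.toBlocks₁₂ 0
        ((-(r + 1)) • (1 : Matrix (Fin nx) (Fin nx) ℝ))
        (Sum.inr ⟨0, hnx⟩) (Sum.inr ⟨0, hnx⟩)| = r + 1 := by
      rw [Matrix.fromBlocks_apply₂₂, Matrix.smul_apply, Matrix.one_apply_eq, smul_eq_mul,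
        mul_one, abs_neg, abs_of_nonneg (by linarith : (0:ℝ) ≤ r + 1)]
    rw [hent] at hle
    linarith
  · have hex : ∃ i j, K.toBlocks₂₁ i j ≠ 0 := by
      by_contra h
      push_neg at h
      exact hB (by ext i j; simp [h])
    obtain ⟨i, j, hij⟩ := hex
    have hb : 0 < |K.toBlocks₂₁ i j| := abs_pos.mpr hij
    set c : ℝ := (r + 1) / |K.toBlocks₂₁ i j| with hcdef
    have hc : 0 < c := div_pos (by linarith) hb
    refine ⟨fromBlocks K.toBlocks₁₁ (c⁻¹ • K.toBlocks₁₂) (c • K.toBlocks₂₁) K.toBlocks₂₂,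
      scale_mem P hK hc, ?_⟩
    have hle := abs_entry_le_frobNorm
      (fromBlocks K.toBlocks₁₁ (c⁻¹ • K.toBlocks₁₂) (c • K.toBlocks₂₁) K.toBlocks₂₂)
      (Sum.inr i) (Sum.inl j)
    have hent : |fromBlocks K.toBlocks₁₁ (c⁻¹ • K.toBlocks₁₂) (c • K.toBlocks₂₁)
        K.toBlocks₂₂ (Sum.inr i) (Sum.inl j)| = r + 1 := by
      rw [Matrix.fromBlocks_apply₂₁, Matrix.smul_apply, smul_eq_mul, abs_mul,
        abs_of_pos hc, hcdef, div_mul_cancel₀ _ hb.ne']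
    rw [hent] at hle
    linarith
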